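/- arXiv:1303.6409 — 2 statements merged into one kernel-verified Lean document; each statement's English description precedes it below -/
import Mathlib

section
/- Let g: 𝒳 → 𝒴 be a piecewise bijective function with finite partition {𝒳_i}, let X have distribution P_X ≪ μ^N supported on 𝒳, Y = g(X). Consider the suboptimal reconstructor r_sub defined by r_sub(y) = g^{-1}(y) if y ∈ 𝒴_b, r_sub(y) = g_k^{-1}(y) if y ∈ 𝒴_k \ 𝒴_b, and taking any value in 𝒳_k otherwise, where k = argmax_i P_X(𝒳_i ∪ 𝒳_b) and 𝒴_k = g(𝒳_k). Its error probability is P̂_e = 1 − P_X(𝒳_k ∪ 𝒳_b), and with K̄ = ess sup_{y∈𝒴} card(g^{-1}[{y}]) the information loss satisfies L(X→Y) ≤ 1 − P_b + P̂_e log(K̄ − 1). -/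
open MeasureTheory ProbabilityTheory Filter Set
open scoped ENNReal NNReal Topology

noncomputable section

/-- Base-2 entropy of the discrete (atomic) part of a measure. -/
def pmfEntropy {β : Type*} [MeasurableSpace β] (ν : Measure β) : ℝ≥0∞ :=
  ∑' b : β, ENNReal.ofReal (-((ν {b}).toReal * Real.logb 2 (ν {b}).toReal))

/-- Conditional entropy `H(X | Y)` (of a discretely supported `X`) given `Y`,
computed through the regular conditional distribution of `X` given `Y`. -/
def condEnt {α β γ : Type*} [MeasurableSpace α] [MeasurableSpace β] [StandardBorelSpace β]
    [Nonempty β] [MeasurableSpace γ] (μ : Measure α) [IsFiniteMeasure μ]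
    (X : α → β) (Y : α → γ) : ℝ≥0∞ :=
  ∫⁻ y, pmfEntropy (condDistrib X Y μ y) ∂(μ.map Y)

/-- Componentwise uniform quantization `X̂ₙ = ⌊2ⁿ X⌋ / 2ⁿ`. -/
def quant {ι : Type*} (n : ℕ) (x : ι → ℝ) : ι → ℝ :=
  fun i => (⌊(2 : ℝ) ^ n * x i⌋ : ℝ) / (2 : ℝ) ^ n

/-- `H(X̂ₙ)`, entropy of the quantized input. -/
def entQ {α ι : Type*} [MeasurableSpace α] [Fintype ι] (μ : Measure α)
    (X : α → ι → ℝ) (n : ℕ) : ℝ≥0∞ :=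
  pmfEntropy (μ.map fun a => quant n (X a))

/-- `H(X̂ₙ | Y)`. -/
def condEntQ {α ι γ : Type*} [MeasurableSpace α] [Fintype ι] [MeasurableSpace γ]
    (μ : Measure α) [IsFiniteMeasure μ] (X : α → ι → ℝ) (Y : α → γ) (n : ℕ) : ℝ≥0∞ :=
  condEnt μ (fun a => quant n (X a)) Y

/-- Information loss `L(X→Y) = H(X|Y) = limₙ H(X̂ₙ|Y)`; since the sequence
`H(X̂ₙ|Y)` is nondecreasing in `n` the limit equals the supremum. -/
def infoLoss {α ι γ : Type*} [MeasurableSpace α] [Fintype ι] [MeasurableSpace γ]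
    (μ : Measure α) [IsFiniteMeasure μ] (X : α → ι → ℝ) (Y : α → γ) : ℝ≥0∞ :=
  ⨆ n : ℕ, condEntQ μ X Y n

/-- The sequence `H(X̂ₙ|Y)/H(X̂ₙ)` whose limit is the relative information loss. -/
def relLossSeq {α ι γ : Type*} [MeasurableSpace α] [Fintype ι] [MeasurableSpace γ]
    (μ : Measure α) [IsFiniteMeasure μ] (X : α → ι → ℝ) (Y : α → γ) (n : ℕ) : ℝ :=
  (condEntQ μ X Y n).toReal / (entQ μ X n).toReal

/-- The sequence `I(X̂ₙ;Y)/H(X̂ₙ) = (H(X̂ₙ) - H(X̂ₙ|Y))/H(X̂ₙ)` whose limit is the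
relative information transfer. -/
def relTransSeq {α ι γ : Type*} [MeasurableSpace α] [Fintype ι] [MeasurableSpace γ]
    (μ : Measure α) [IsFiniteMeasure μ] (X : α → ι → ℝ) (Y : α → γ) (n : ℕ) : ℝ :=
  ((entQ μ X n).toReal - (condEntQ μ X Y n).toReal) / (entQ μ X n).toReal

/-- `H(ν̂ₙ)` for a measure on `ℝᴺ` (quantized entropy of a distribution). -/
def entQM {ι : Type*} [Fintype ι] (ν : Measure (ι → ℝ)) (n : ℕ) : ℝ≥0∞ :=
  pmfEntropy (ν.map (quant n))


/-- A **piecewise bijective function** (PBF) `g : 𝒳 → 𝒴`, `𝒳, 𝒴 ⊆ ℝᴺ`, w.r.t. an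
input distribution `ν`: there is a (countable) partition `{𝒳ᵢ}` of `𝒳 = s` into
measurable sets of positive `ν`-measure on each of which `g` is injective (hence a
bijection onto its image), the Jacobian `J` of `g` exists on the pieces, and
`det J ≠ 0` `ν`-a.s.  (Surjectivity onto `𝒴 = g(𝒳)` is automatic.) -/
structure IsPBF {ι I : Type*} [Fintype ι] [Countable I]
    (g : (ι → ℝ) → ι → ℝ) (s : Set (ι → ℝ)) (pieces : I → Set (ι → ℝ))
    (J : (ι → ℝ) → (ι → ℝ) →L[ℝ] (ι → ℝ)) (ν : Measure (ι → ℝ)) : Prop where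
  meas : Measurable g
  measSet : ∀ i, MeasurableSet (pieces i)
  disj : Pairwise (Function.onFun Disjoint pieces)
  cover : (⋃ i, pieces i) = s
  pos : ∀ i, 0 < ν (pieces i)
  injOn : ∀ i, Set.InjOn g (pieces i)
  deriv : ∀ i, ∀ x ∈ pieces i, HasFDerivWithinAt g (J x) (pieces i) x
  det_ne : ∀ᵐ x ∂ν, (J x).det ≠ 0

/-- Differential entropy (base 2) of a distribution `ν ≪ volume` on `ℝᴺ`:
`h(ν) = −∫ log₂ (dν/dλ) dν = −∫ f log₂ f dλ`. -/
def diffEnt {ι : Type*} [Fintype ι] (ν : Measure (ι → ℝ)) : ℝ :=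
  - ∫ x, Real.logb 2 ((ν.rnDeriv volume x).toReal) ∂ν

section Helpers

lemma measurable_quant {ι : Type*} [Fintype ι] (n : ℕ) : Measurable (quant (ι := ι) n) := by
  unfold quant
  refine measurable_pi_lambda _ fun i => ?_
  exact ((measurable_from_top (α := ℤ)).comp
    ((measurable_const.mul (measurable_pi_apply i)).floor)).div_const _

lemma gibbs_ineq {β : Type*} (T : Finset β) (p q : β → ℝ)
    (hp : ∀ t ∈ T, 0 ≤ p t) (hq : ∀ t ∈ T, 0 < q t)
    (hsum : ∑ t ∈ T, q t ≤ ∑ t ∈ T, p t) :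
    ∑ t ∈ T, -(p t * Real.logb 2 (p t)) ≤ ∑ t ∈ T, p t * -Real.logb 2 (q t) := by
  have hlog2 : (0:ℝ) < Real.log 2 := Real.log_pos one_lt_two
  have key : ∀ t ∈ T, p t * Real.log (q t) - p t * Real.log (p t) ≤ q t - p t := by
    intro t ht
    rcases eq_or_lt_of_le (hp t ht) with h0 | h0
    · rw [← h0]; simpa using (hq t ht).le
    · have h1 := Real.log_le_sub_one_of_pos (div_pos (hq t ht) h0)
      rw [Real.log_div (hq t ht).ne' h0.ne'] at h1
      have h2 := mul_le_mul_of_nonneg_left h1 h0.le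
      have h3 : p t * (q t / p t - 1) = q t - p t := by field_simp
      nlinarith [h2]
  have H : ∑ t ∈ T, (p t * Real.log (q t) - p t * Real.log (p t)) ≤ 0 := by
    calc ∑ t ∈ T, (p t * Real.log (q t) - p t * Real.log (p t))
        ≤ ∑ t ∈ T, (q t - p t) := Finset.sum_le_sum key
      _ = ∑ t ∈ T, q t - ∑ t ∈ T, p t := Finset.sum_sub_distrib _ _
      _ ≤ 0 := by linarith
  rw [← sub_nonpos, ← Finset.sum_sub_distrib]
  have e : ∀ t ∈ T, -(p t * Real.logb 2 (p t)) - p t * -Real.logb 2 (q t)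
      = (p t * Real.log (q t) - p t * Real.log (p t)) / Real.log 2 := by
    intro t ht
    simp only [Real.logb]
    ring
  rw [Finset.sum_congr rfl e, ← Finset.sum_div]
  exact div_nonpos_of_nonpos_of_nonneg H hlog2.le

lemma pmfEntropy_eq_sum {β : Type*} [MeasurableSpace β] (ν : Measure β) (T : Finset β)
    (hT : ν (↑T)ᶜ = 0) :
    pmfEntropy ν = ∑ t ∈ T, ENNReal.ofReal (-((ν {t}).toReal * Real.logb 2 (ν {t}).toReal)) := by
  apply tsum_eq_sum
  intro b hb
  have hb0 : ν {b} = 0 := measure_mono_null (by simpa using hb) hT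
  simp [hb0]

lemma measure_finset_eq_sum {β : Type*} [MeasurableSpace β] [MeasurableSingletonClass β]
    (κ : Measure β) (T : Finset β) :
    κ ↑T = ∑ t ∈ T, κ {t} := by
  have h : (↑T : Set β) = ⋃ t ∈ T, {t} := by ext x; simp
  rw [h]
  exact measure_biUnion_finset (fun i _ j _ hij => by simp [Set.disjoint_singleton, hij])
    (fun _ _ => measurableSet_singleton _)

lemma sum_toReal_eq_one {β : Type*} [MeasurableSpace β] [MeasurableSingletonClass β]
    (κ : Measure β) [IsProbabilityMeasure κ] (T : Finset β)
    (hT : κ (↑T)ᶜ = 0) : ∑ t ∈ T, (κ {t}).toReal = 1 := by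
  have h1 : κ ↑T = 1 := by
    have := measure_add_measure_compl (μ := κ) (T.finite_toSet.measurableSet)
    rw [hT, add_zero] at this
    simpa using this
  have h2 := measure_finset_eq_sum κ T
  rw [h1] at h2
  rw [← ENNReal.toReal_sum (fun a _ => measure_ne_top κ _), ← h2]
  simp

lemma pmfEntropy_eq_zero_of_card_le_one {β : Type*} [MeasurableSpace β]
    [MeasurableSingletonClass β] (κ : Measure β) [IsProbabilityMeasure κ] (T : Finset β)
    (hT : κ (↑T)ᶜ = 0) (hcard : T.card ≤ 1) : pmfEntropy κ = 0 := by
  rw [pmfEntropy_eq_sum κ T hT]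
  apply Finset.sum_eq_zero
  intro t ht
  have hsub : (↑T : Set β) ⊆ {t} := by
    intro x hx
    have := Finset.card_le_one.mp hcard x (by exact_mod_cast hx) t ht
    simp [this]
  have h1 : κ {t}ᶜ = 0 := measure_mono_null (Set.compl_subset_compl.mpr (by simpa using hsub)) hT
  have h2 : κ {t} = 1 := by
    have := measure_add_measure_compl (μ := κ) (measurableSet_singleton t)
    rw [h1, add_zero] at this; simpa using this
  simp [h2]

lemma neg_mul_logb_nonneg {x : ℝ} (h0 : 0 ≤ x) (h1 : x ≤ 1) :
    0 ≤ -(x * Real.logb 2 x) := by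
  rcases eq_or_lt_of_le h0 with h | h
  · simp [← h]
  · have : Real.logb 2 x ≤ 0 := Real.logb_nonpos one_lt_two h0 h1
    nlinarith

lemma pmfEntropy_le_fano {β : Type*} [MeasurableSpace β] [MeasurableSingletonClass β]
    (κ : Measure β) [IsProbabilityMeasure κ] (T : Finset β)
    (hT : κ (↑T)ᶜ = 0) (K : ℝ) (hK : 2 ≤ K) (hcard : (T.card : ℝ) ≤ K) (x₀ : β) :
    pmfEntropy κ ≤ ENNReal.ofReal (1 + (κ {x₀}ᶜ).toReal * Real.logb 2 (K - 1)) := by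
  classical
  set p : β → ℝ := fun t => (κ {t}).toReal with hp_def
  have hp0 : ∀ t, 0 ≤ p t := fun t => ENNReal.toReal_nonneg
  have hp1 : ∀ t, p t ≤ 1 := by
    intro t
    have h := prob_le_one (μ := κ) (s := {t})
    simpa [hp_def] using ENNReal.toReal_mono ENNReal.one_ne_top h
  have hsum1 : ∑ t ∈ T, p t = 1 := sum_toReal_eq_one κ T hT
  set e : ℝ := (κ {x₀}ᶜ).toReal with he_def
  have he0 : 0 ≤ e := ENNReal.toReal_nonneg
  have hecompl : e = 1 - p x₀ := by
    have h : κ {x₀}ᶜ = 1 - κ {x₀} := by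
      rw [measure_compl (measurableSet_singleton x₀) (measure_ne_top κ _), measure_univ]
    rw [he_def, h, ENNReal.toReal_sub_of_le prob_le_one ENNReal.one_ne_top]
    simp [hp_def]
  have hK1 : (1:ℝ) ≤ K - 1 := by linarith
  have hK1pos : (0:ℝ) < K - 1 := by linarith
  have hlogK1 : 0 ≤ Real.logb 2 (K - 1) := Real.logb_nonneg one_lt_two hK1
  have hent : pmfEntropy κ = ENNReal.ofReal (∑ t ∈ T, -(p t * Real.logb 2 (p t))) := by
    rw [pmfEntropy_eq_sum κ T hT, ENNReal.ofReal_sum_of_nonneg]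
    intro t _
    exact neg_mul_logb_nonneg (hp0 t) (hp1 t)
  rw [hent]
  apply ENNReal.ofReal_le_ofReal
  by_cases hx : x₀ ∈ T
  · set q : β → ℝ := fun t => if t = x₀ then 1/2 else 1/(2*(K-1)) with hq_def
    have hqpos : ∀ t ∈ T, 0 < q t := by
      intro t _
      by_cases h : t = x₀
      · simp only [hq_def, if_pos h]; norm_num
      · simp only [hq_def, if_neg h]
        exact div_pos one_pos (by linarith)
    have hqsum : ∑ t ∈ T, q t ≤ ∑ t ∈ T, p t := by
      rw [hsum1, ← Finset.add_sum_erase _ _ hx]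
      have h1 : ∑ t ∈ T.erase x₀, q t = (T.erase x₀).card * (1/(2*(K-1))) := by
        rw [Finset.sum_congr rfl (fun t ht => ?_), Finset.sum_const, nsmul_eq_mul]
        simp [hq_def, Finset.ne_of_mem_erase ht]
      have hcarde : ((T.erase x₀).card : ℝ) ≤ K - 1 := by
        rw [Finset.card_erase_of_mem hx]
        have : (1:ℕ) ≤ T.card := Finset.card_pos.mpr ⟨x₀, hx⟩
        push_cast [this]
        linarith
      have h2 : ((T.erase x₀).card : ℝ) * (1/(2*(K-1))) ≤ 1/2 := by
        have ha : ((T.erase x₀).card : ℝ) * (1/(2*(K-1))) ≤ (K-1) * (1/(2*(K-1))) :=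
          mul_le_mul_of_nonneg_right hcarde (div_pos one_pos (by linarith)).le
        have hb : (K-1) * (1/(2*(K-1))) = 1/2 := by field_simp
        linarith
      simp only [hq_def, if_pos rfl]
      rw [h1]
      linarith
    have hg := gibbs_ineq T p q (fun t _ => hp0 t) hqpos hqsum
    refine hg.trans ?_
    have hrhs : ∑ t ∈ T, p t * -Real.logb 2 (q t)
        = p x₀ * 1 + (∑ t ∈ T.erase x₀, p t) * (1 + Real.logb 2 (K-1)) := by
      rw [← Finset.add_sum_erase _ _ hx, Finset.sum_mul]
      congr 1
      · simp only [hq_def, if_pos rfl]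
        rw [one_div, Real.logb_inv, Real.logb_self_eq_one one_lt_two]
        ring
      · apply Finset.sum_congr rfl
        intro t ht
        simp only [hq_def, if_neg (Finset.ne_of_mem_erase ht)]
        rw [one_div, Real.logb_inv, Real.logb_mul (by norm_num) (by positivity),
          Real.logb_self_eq_one one_lt_two]
        ring
    have hesum : ∑ t ∈ T.erase x₀, p t = e := by
      rw [hecompl]
      have := Finset.add_sum_erase _ p hx
      rw [← hsum1]
      linarith [this.symm]
    rw [hrhs, hesum]
    nlinarith [hp1 x₀, hp0 x₀]
  · have hx0 : κ {x₀} = 0 := measure_mono_null (by simpa using hx) hT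
    have he1 : e = 1 := by
      have h : κ {x₀}ᶜ = 1 - κ {x₀} := by
        rw [measure_compl (measurableSet_singleton x₀) (measure_ne_top κ _), measure_univ]
      rw [he_def, h, hx0]
      simp
    set q : β → ℝ := fun _ => 1/K with hq_def
    have hqpos : ∀ t ∈ T, 0 < q t := fun t _ => div_pos one_pos (by linarith)
    have hqsum : ∑ t ∈ T, q t ≤ ∑ t ∈ T, p t := by
      rw [hsum1, Finset.sum_const, nsmul_eq_mul]
      have ha : (T.card : ℝ) * (1/K) ≤ K * (1/K) :=
        mul_le_mul_of_nonneg_right hcard (div_pos one_pos (by linarith)).le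
      have hb : K * (1/K) = 1 := by field_simp
      linarith
    have hg := gibbs_ineq T p q (fun t _ => hp0 t) hqpos hqsum
    refine hg.trans ?_
    have hrhs : ∑ t ∈ T, p t * -Real.logb 2 (q t) = Real.logb 2 K := by
      have hcongr : ∀ t ∈ T, p t * -Real.logb 2 (q t) = p t * Real.logb 2 K := by
        intro t _
        simp only [hq_def, one_div, Real.logb_inv]
        ring
      rw [Finset.sum_congr rfl hcongr, ← Finset.sum_mul, hsum1, one_mul]
    rw [hrhs, he1, one_mul]
    have h2 : Real.logb 2 K ≤ Real.logb 2 (2 * (K - 1)) :=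
      Real.logb_le_logb_of_le one_lt_two (by linarith) (by linarith)
    rw [Real.logb_mul (by norm_num) (by linarith),
      Real.logb_self_eq_one one_lt_two] at h2
    linarith

end Helpers

/-- **Suboptimal reconstruction for PBFs.**  Let `g` be piecewise bijective with a
finite partition, `P_X ≪ μᴺ` supported on `𝒳`, `Y = g(X)`.  With bijective part
`𝒳_b`, `𝒴_b = g(𝒳_b)`, `P_b = P_X(𝒳_b)`, let `k` maximize `P_X(𝒳ᵢ ∪ 𝒳_b)` and let
`r_sub` invert `g` on `𝒴_b`, invert `g_k` on `𝒴_k ∖ 𝒴_b`, and return some point of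
`𝒳_k` otherwise.  Then its error probability is `P̂_e = 1 − P_X(𝒳_k ∪ 𝒳_b)` and,
with `K̄ = ess supᵧ card g⁻¹[{y}]`, the information loss satisfies
`L(X→Y) ≤ 1 − P_b + P̂_e log₂(K̄ − 1)`. -/
theorem infoLoss_pbf_suboptimal_reconstructor
    {α ι I : Type*} [MeasurableSpace α] [Fintype ι] [Fintype I]
    (μ : Measure α) [IsProbabilityMeasure μ]
    (X : α → ι → ℝ) (hX : Measurable X)
    (g : (ι → ℝ) → ι → ℝ) (s : Set (ι → ℝ)) (pieces : I → Set (ι → ℝ))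
    (J : (ι → ℝ) → (ι → ℝ) →L[ℝ] (ι → ℝ))
    (hpbf : IsPBF g s pieces J (μ.map X))
    (hac : μ.map X ≪ (volume : Measure (ι → ℝ)))
    (hXs : ∀ a, X a ∈ s)
    (Xb : Set (ι → ℝ)) (hXb : Xb = {x | x ∈ s ∧ (s ∩ g ⁻¹' {g x}).encard = 1})
    (Pb : ℝ) (hPb : Pb = ((μ.map X) Xb).toReal)
    (k : I) (hk : ∀ i, (μ.map X) (pieces i ∪ Xb) ≤ (μ.map X) (pieces k ∪ Xb))
    (r : (ι → ℝ) → ι → ℝ) (hr : Measurable r)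
    (hr₁ : ∀ y ∈ g '' Xb, r y ∈ Xb ∧ g (r y) = y)
    (hr₂ : ∀ y ∈ g '' pieces k, y ∉ g '' Xb → r y ∈ pieces k ∧ g (r y) = y)
    (hr₃ : ∀ y, y ∉ g '' pieces k → y ∉ g '' Xb → r y ∈ pieces k)
    (Pehat : ℝ) (hPehat : Pehat = 1 - ((μ.map X) (pieces k ∪ Xb)).toReal)
    (Kbar : ℝ) (hKbar : Kbar = (essSup (fun y => ((s ∩ g ⁻¹' {y}).encard : ℝ≥0∞))
      (μ.map fun a => g (X a))).toReal) :
    (μ {a | r (g (X a)) ≠ X a}).toReal = Pehat ∧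
    infoLoss μ X (fun a => g (X a)) ≤
      ENNReal.ofReal (1 - Pb + Pehat * Real.logb 2 (Kbar - 1)) := by
  classical
  have hg : Measurable g := hpbf.meas
  have hY : Measurable (fun a => g (X a)) := hg.comp hX
  have hs_meas : MeasurableSet s :=
    hpbf.cover ▸ MeasurableSet.iUnion hpbf.measSet
  have hpieces_sub : ∀ i, pieces i ⊆ s := fun i => by
    rw [← hpbf.cover]; exact subset_iUnion pieces i
  have hXb_sub : Xb ⊆ s := by rw [hXb]; exact fun x hx => hx.1
  haveI : IsProbabilityMeasure (μ.map X) := Measure.isProbabilityMeasure_map hX.aemeasurable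
  haveI : IsProbabilityMeasure (μ.map (fun a => g (X a))) :=
    Measure.isProbabilityMeasure_map hY.aemeasurable
  -- uniqueness of preimages of points of `Xb`
  have huniq : ∀ x' ∈ Xb, ∀ z ∈ s, g z = g x' → z = x' := by
    intro x' hx' z hz hgz
    rw [hXb] at hx'
    obtain ⟨hx's, hcard⟩ := hx'
    rw [Set.encard_eq_one] at hcard
    obtain ⟨w, hw⟩ := hcard
    have hz' : z ∈ s ∩ g ⁻¹' {g x'} := ⟨hz, by simp [hgz]⟩
    have hx'' : x' ∈ s ∩ g ⁻¹' {g x'} := ⟨hx's, by simp⟩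
    rw [hw] at hz' hx''
    simp only [Set.mem_singleton_iff] at hz' hx''
    rw [hz', hx'']
  -- the set of correctly reconstructed inputs
  set E : Set (ι → ℝ) := {x | r (g x) = x} with hE_def
  have hE_meas : MeasurableSet E :=
    measurableSet_eq_fun (hr.comp hg) measurable_id
  have hset : pieces k ∪ Xb = s ∩ E := by
    ext x
    constructor
    · rintro (hxk | hxb)
      · refine ⟨hpieces_sub k hxk, ?_⟩
        by_cases hgx : g x ∈ g '' Xb
        · obtain ⟨x', hx', hgx'⟩ := hgx
          obtain ⟨hrXb, hrg⟩ := hr₁ (g x) ⟨x', hx', hgx'⟩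
          have h1 : r (g x) = x' :=
            huniq x' hx' (r (g x)) (hXb_sub hrXb) (by rw [hrg, ← hgx'])
          have h2 : x = x' := huniq x' hx' x (hpieces_sub k hxk) hgx'.symm
          show r (g x) = x
          rw [h1, h2]
        · obtain ⟨hrk, hrg⟩ := hr₂ (g x) ⟨x, hxk, rfl⟩ hgx
          exact hpbf.injOn k hrk hxk hrg
      · refine ⟨hXb_sub hxb, ?_⟩
        obtain ⟨hrXb, hrg⟩ := hr₁ (g x) ⟨x, hxb, rfl⟩
        exact huniq x hxb (r (g x)) (hXb_sub hrXb) hrg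
    · rintro ⟨hxs, hxE⟩
      by_cases hgx : g x ∈ g '' Xb
      · right
        have := (hr₁ (g x) hgx).1
        rwa [hxE] at this
      · left
        by_cases hgk : g x ∈ g '' pieces k
        · have := (hr₂ (g x) hgk hgx).1
          rwa [hxE] at this
        · have := hr₃ (g x) hgk hgx
          rwa [hxE] at this
  have hνs_compl : (μ.map X) sᶜ = 0 := by
    rw [Measure.map_apply hX hs_meas.compl]
    have : X ⁻¹' sᶜ = ∅ := by ext a; simp [hXs a]
    simp [this]
  have hνs : (μ.map X) s = 1 := by
    have := measure_add_measure_compl (μ := μ.map X) hs_meas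
    rw [hνs_compl, add_zero] at this
    simpa using this
  -- Part 1 : the error probability
  have hpre : {a | r (g (X a)) ≠ X a} = X ⁻¹' (s ∩ Eᶜ) := by
    ext a
    simp only [Set.mem_setOf_eq, Set.mem_preimage, Set.mem_inter_iff, Set.mem_compl_iff]
    exact ⟨fun h => ⟨hXs a, h⟩, fun h => h.2⟩
  have hdiff : (μ.map X) (s ∩ Eᶜ) = 1 - (μ.map X) (s ∩ E) := by
    have h1 : s ∩ Eᶜ = s \ (s ∩ E) := by ext x; simp only [Set.mem_inter_iff, Set.mem_compl_iff, Set.mem_diff]; tauto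
    rw [h1, measure_diff inter_subset_left ((hs_meas.inter hE_meas).nullMeasurableSet)
      (measure_ne_top _ _), hνs]
  have hμerr : μ {a | r (g (X a)) ≠ X a} = 1 - (μ.map X) (s ∩ E) := by
    rw [hpre, ← Measure.map_apply hX (hs_meas.inter hE_meas.compl), hdiff]
  have hPart1 : (μ {a | r (g (X a)) ≠ X a}).toReal = Pehat := by
    rw [hμerr, hPehat, hset, ENNReal.toReal_sub_of_le prob_le_one ENNReal.one_ne_top]
    simp
  refine ⟨hPart1, ?_⟩

  -- ## Part 2
  have himg : ∀ i, MeasurableSet (g '' pieces i) := fun i =>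
    (hpbf.measSet i).image_of_measurable_injOn hg (hpbf.injOn i)
  set Bset : Set (ι → ℝ) :=
    ⋃ i, ((g '' pieces i) ∩ (⋂ j ∈ ({i}ᶜ : Set I), (g '' pieces j)ᶜ)) with hB_def
  have hB_meas : MeasurableSet Bset :=
    MeasurableSet.iUnion fun i => (himg i).inter
      (MeasurableSet.biInter (Set.to_countable _) fun j _ => (himg j).compl)
  have hBiff : ∀ y, y ∈ Bset ↔ (s ∩ g ⁻¹' {y}).encard = 1 := by
    intro y
    constructor
    · intro hy
      simp only [hB_def, Set.mem_iUnion, Set.mem_inter_iff, Set.mem_iInter,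
        Set.mem_compl_iff, Set.mem_singleton_iff] at hy
      obtain ⟨i, ⟨x, hxi, hgx⟩, hnot⟩ := hy
      rw [Set.encard_eq_one]
      refine ⟨x, ?_⟩
      ext z
      simp only [Set.mem_inter_iff, Set.mem_preimage, Set.mem_singleton_iff]
      constructor
      · rintro ⟨hzs, hgz⟩
        rw [← hpbf.cover] at hzs
        obtain ⟨j, hzj⟩ := Set.mem_iUnion.mp hzs
        have hji : j = i := by
          by_contra hne
          exact hnot j hne ⟨z, hzj, hgz⟩
        exact hpbf.injOn i (hji ▸ hzj) hxi (by rw [hgz, hgx])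
      · rintro rfl
        exact ⟨hpieces_sub i hxi, hgx⟩
    · intro hy
      obtain ⟨x, hx⟩ := Set.encard_eq_one.mp hy
      have hxmem : x ∈ s ∩ g ⁻¹' {y} := by rw [hx]; exact Set.mem_singleton x
      obtain ⟨hxs, hgx⟩ := hxmem
      simp only [Set.mem_preimage, Set.mem_singleton_iff] at hgx
      have hxs' := hxs
      rw [← hpbf.cover] at hxs'
      obtain ⟨i, hxi⟩ := Set.mem_iUnion.mp hxs'
      simp only [hB_def, Set.mem_iUnion, Set.mem_inter_iff, Set.mem_iInter,
        Set.mem_compl_iff, Set.mem_singleton_iff]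
      refine ⟨i, ⟨x, hxi, hgx⟩, ?_⟩
      rintro j hji ⟨z, hzj, hgz⟩
      have hz : z ∈ s ∩ g ⁻¹' {y} := ⟨hpieces_sub j hzj, by simp [hgz]⟩
      rw [hx, Set.mem_singleton_iff] at hz
      rw [hz] at hzj
      exact Set.disjoint_left.mp (hpbf.disj hji) hzj hxi
  have hXbBset : Xb = s ∩ g ⁻¹' Bset := by
    rw [hXb]
    ext x
    simp only [Set.mem_setOf_eq, Set.mem_inter_iff, Set.mem_preimage]
    exact and_congr_right fun _ => (hBiff (g x)).symm
  have hXb_meas : MeasurableSet Xb := by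
    rw [hXbBset]; exact hs_meas.inter (hg hB_meas)
  have hηB : (μ.map (fun a => g (X a))) Bset = (μ.map X) Xb := by
    rw [Measure.map_apply hY hB_meas]
    have hpre2 : (fun a => g (X a)) ⁻¹' Bset = X ⁻¹' Xb := by
      ext a
      rw [hXbBset]
      simp [hXs a]
    rw [hpre2, ← Measure.map_apply hX hXb_meas]
  have hcard_le : ∀ y, (s ∩ g ⁻¹' {y}).encard ≤ (Fintype.card I : ℕ∞) := by
    intro y
    rcases Set.eq_empty_or_nonempty (s ∩ g ⁻¹' {y}) with h | h
    · simp [h]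
    · obtain ⟨x₀, hx₀s, _⟩ := h
      have hI : ∃ i, x₀ ∈ pieces i := Set.mem_iUnion.mp (by rw [hpbf.cover]; exact hx₀s)
      haveI : Nonempty I := ⟨hI.choose⟩
      set f : (ι → ℝ) → I := fun x =>
        if h : x ∈ s then (Set.mem_iUnion.mp ((hpbf.cover).symm ▸ h)).choose
        else Classical.arbitrary I with hf_def
      have hfmem : ∀ x, ∀ hx : x ∈ s, x ∈ pieces (f x) := by
        intro x hx
        simp only [hf_def, dif_pos hx]
        exact (Set.mem_iUnion.mp ((hpbf.cover).symm ▸ hx)).choose_spec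
      have hinj : Set.InjOn f (s ∩ g ⁻¹' {y}) := by
        rintro u ⟨hus, hgu⟩ v ⟨hvs, hgv⟩ hfv
        simp only [Set.mem_preimage, Set.mem_singleton_iff] at hgu hgv
        exact hpbf.injOn (f v) (hfv ▸ hfmem u hus) (hfmem v hvs) (by rw [hgu, hgv])
      have h := Set.encard_le_encard_of_injOn (Set.mapsTo_univ f _) hinj
      simpa [Set.encard_univ, Nat.card_eq_fintype_card] using h
  have hKb_le : essSup (fun y => ((s ∩ g ⁻¹' {y}).encard : ℝ≥0∞)) (μ.map fun a => g (X a))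
      ≤ (Fintype.card I : ℝ≥0∞) := by
    refine essSup_le_of_ae_le _ ?_
    apply Filter.Eventually.of_forall
    intro y
    show ((s ∩ g ⁻¹' {y}).encard : ℝ≥0∞) ≤ ((Fintype.card I : ℕ) : ℝ≥0∞)
    have := ENat.toENNReal_le.mpr (hcard_le y)
    exact_mod_cast this
  have hKb_ne_top : essSup (fun y => ((s ∩ g ⁻¹' {y}).encard : ℝ≥0∞))
      (μ.map fun a => g (X a)) ≠ ⊤ :=
    (lt_of_le_of_lt hKb_le (ENNReal.natCast_lt_top _)).ne
  have hKb_ae : ∀ᵐ y ∂(μ.map fun a => g (X a)), ((s ∩ g ⁻¹' {y}).encard : ℝ≥0∞)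
      ≤ essSup (fun y => ((s ∩ g ⁻¹' {y}).encard : ℝ≥0∞)) (μ.map fun a => g (X a)) :=
    ENNReal.ae_le_essSup _
  have hq_meas : ∀ n : ℕ, Measurable (fun a => quant n (X a)) :=
    fun n => (measurable_quant n).comp hX
  have hdis : ∀ n : ℕ, μ.map (fun a => (g (X a), quant n (X a)))
      = (μ.map fun a => g (X a)) ⊗ₘ condDistrib (fun a => quant n (X a)) (fun a => g (X a)) μ := by
    intro n
    haveI : IsProbabilityMeasure (μ.map (fun a => (g (X a), quant n (X a)))) :=
      Measure.isProbabilityMeasure_map (hY.prodMk (hq_meas n)).aemeasurable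
    rw [condDistrib_def]
    rw [← Measure.fst_map_prodMk (X := fun a => g (X a)) (hq_meas n)]
    exact ((μ.map fun a => (g (X a), quant n (X a))).disintegrate _).symm
  have hconc : ∀ n : ℕ, ∀ᵐ y ∂(μ.map fun a => g (X a)),
      (condDistrib (fun a => quant n (X a)) (fun a => g (X a)) μ) y
        ((quant n '' (s ∩ g ⁻¹' {y}))ᶜ) = 0 := by
    intro n
    set D : Set ((ι → ℝ) × (ι → ℝ)) := ⋃ i, (fun x => (g x, quant n x)) '' pieces i with hD_def
    have hD_meas : MeasurableSet D := MeasurableSet.iUnion fun i =>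
      (hpbf.measSet i).image_of_measurable_injOn (hg.prodMk (measurable_quant n))
        (fun u hu v hv huv => hpbf.injOn i hu hv (congrArg Prod.fst huv))
    have hDfull0 : (μ.map (fun a => (g (X a), quant n (X a)))) Dᶜ = 0 := by
      rw [Measure.map_apply (hY.prodMk (hq_meas n)) hD_meas.compl]
      have hempty : (fun a => (g (X a), quant n (X a))) ⁻¹' Dᶜ = ∅ := by
        ext a
        simp only [Set.mem_preimage, Set.mem_compl_iff, Set.mem_empty_iff_false, iff_false,
          not_not]
        obtain ⟨i, hi⟩ := Set.mem_iUnion.mp ((hpbf.cover).symm ▸ hXs a)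
        exact Set.mem_iUnion.mpr ⟨i, ⟨X a, hi, rfl⟩⟩
      rw [hempty]
      exact measure_empty
    have hDfull : ∀ᵐ p ∂(μ.map (fun a => (g (X a), quant n (X a)))), p ∈ D := by
      rw [ae_iff]
      exact hDfull0
    rw [hdis n] at hDfull
    have hae := Measure.ae_ae_of_ae_compProd hDfull
    filter_upwards [hae] with y hy
    have hslice : {x | (y, x) ∈ D} = quant n '' (s ∩ g ⁻¹' {y}) := by
      ext w
      simp only [hD_def, Set.mem_iUnion, Set.mem_image, Set.mem_setOf_eq, Set.mem_inter_iff,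
        Set.mem_preimage, Set.mem_singleton_iff, Prod.mk.injEq]
      constructor
      · rintro ⟨i, z, hzi, hgz, hqz⟩
        exact ⟨z, ⟨hpieces_sub i hzi, hgz⟩, hqz⟩
      · rintro ⟨z, ⟨hzs, hgz⟩, hqz⟩
        obtain ⟨i, hzi⟩ := Set.mem_iUnion.mp ((hpbf.cover).symm ▸ hzs)
        exact ⟨i, z, hzi, hgz, hqz⟩
    have hcompl : {x | ¬ (y, x) ∈ D} = (quant n '' (s ∩ g ⁻¹' {y}))ᶜ := by
      rw [← hslice]; rfl
    rw [← hcompl]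
    exact ae_iff.mp hy
  have hμerr' : μ {a | X a ≠ r (g (X a))} = ENNReal.ofReal Pehat := by
    have h1 : {a | X a ≠ r (g (X a))} = {a | r (g (X a)) ≠ X a} := by
      ext a; exact ne_comm
    rw [h1, ← hPart1, ENNReal.ofReal_toReal (measure_ne_top _ _)]
  have hEn_meas : ∀ n : ℕ,
      MeasurableSet ({p : (ι → ℝ) × (ι → ℝ) | p.2 = quant n (r p.1)}ᶜ) := fun n =>
    (measurableSet_eq_fun measurable_snd
      ((measurable_quant n).comp (hr.comp measurable_fst))).compl
  have hEnslice : ∀ n : ℕ, ∀ y, Prod.mk y ⁻¹' ({p : (ι → ℝ) × (ι → ℝ) | p.2 = quant n (r p.1)}ᶜ)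
      = ({quant n (r y)}ᶜ : Set (ι → ℝ)) := by
    intro n y; ext w; simp
  have herr : ∀ n : ℕ, ∫⁻ y, (condDistrib (fun a => quant n (X a)) (fun a => g (X a)) μ) y
      ({quant n (r y)}ᶜ) ∂(μ.map fun a => g (X a)) ≤ ENNReal.ofReal Pehat := by
    intro n
    have h1 : ∫⁻ y, (condDistrib (fun a => quant n (X a)) (fun a => g (X a)) μ) y
        ({quant n (r y)}ᶜ) ∂(μ.map fun a => g (X a))
        = ((μ.map fun a => g (X a)) ⊗ₘ condDistrib (fun a => quant n (X a))
            (fun a => g (X a)) μ) ({p : (ι → ℝ) × (ι → ℝ) | p.2 = quant n (r p.1)}ᶜ) := by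
      rw [Measure.compProd_apply (hEn_meas n)]
      exact (lintegral_congr fun y => by rw [hEnslice n y]).symm
    rw [h1, ← hdis n, Measure.map_apply (hY.prodMk (hq_meas n)) (hEn_meas n)]
    have hsub : (fun a => (g (X a), quant n (X a))) ⁻¹'
        ({p : (ι → ℝ) × (ι → ℝ) | p.2 = quant n (r p.1)}ᶜ) ⊆ {a | X a ≠ r (g (X a))} := by
      intro a ha
      simp only [Set.mem_preimage, Set.mem_compl_iff, Set.mem_setOf_eq] at ha ⊢
      intro hxa
      exact ha (congrArg (quant n) hxa)
    exact le_trans (measure_mono hsub) (le_of_eq hμerr')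
  have hemeas : ∀ n : ℕ, Measurable (fun y =>
      (condDistrib (fun a => quant n (X a)) (fun a => g (X a)) μ) y ({quant n (r y)}ᶜ)) := by
    intro n
    have h := Kernel.measurable_kernel_prodMk_left
      (κ := condDistrib (fun a => quant n (X a)) (fun a => g (X a)) μ) (hEn_meas n)
    have heq : (fun y => (condDistrib (fun a => quant n (X a)) (fun a => g (X a)) μ) y
        (Prod.mk y ⁻¹' ({p : (ι → ℝ) × (ι → ℝ) | p.2 = quant n (r p.1)}ᶜ)))
        = fun y => (condDistrib (fun a => quant n (X a)) (fun a => g (X a)) μ) y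
          ({quant n (r y)}ᶜ) := by
      funext y; rw [hEnslice n y]
    rw [heq] at h
    exact h
  have hPehat_nonneg : 0 ≤ Pehat := by rw [← hPart1]; exact ENNReal.toReal_nonneg
  have hPb_nonneg : 0 ≤ Pb := hPb ▸ ENNReal.toReal_nonneg
  have hPb_le_one : Pb ≤ 1 := by
    rw [hPb]
    have := ENNReal.toReal_mono ENNReal.one_ne_top (prob_le_one (μ := μ.map X) (s := Xb))
    simpa using this
  by_cases hA : ∀ᵐ y ∂(μ.map fun a => g (X a)), (s ∩ g ⁻¹' {y}).encard ≤ 1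
  · -- essentially bijective : information loss is zero
    have hzero : ∀ n, condEntQ μ X (fun a => g (X a)) n = 0 := by
      intro n
      have hae0 : ∀ᵐ y ∂(μ.map fun a => g (X a)), pmfEntropy
          ((condDistrib (fun a => quant n (X a)) (fun a => g (X a)) μ) y) = 0 := by
        filter_upwards [hconc n, hA] with y h1 h2
        have hfin : (s ∩ g ⁻¹' {y}).Finite := by
          rw [← Set.encard_lt_top_iff]
          exact lt_of_le_of_lt h2 (by exact_mod_cast ENat.coe_lt_top 1)
        have hfin' : (quant n '' (s ∩ g ⁻¹' {y})).Finite := hfin.image _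
        apply pmfEntropy_eq_zero_of_card_le_one _ hfin'.toFinset
        · rwa [Set.Finite.coe_toFinset]
        · have hc : (hfin'.toFinset.card : ℕ∞) ≤ 1 := by
            rw [← Set.Finite.encard_eq_coe_toFinset_card]
            exact le_trans (Set.encard_image_le _ _) h2
          exact_mod_cast hc
      have : condEntQ μ X (fun a => g (X a)) n = ∫⁻ y, pmfEntropy
          ((condDistrib (fun a => quant n (X a)) (fun a => g (X a)) μ) y)
          ∂(μ.map fun a => g (X a)) := rfl
      rw [this, lintegral_congr_ae hae0, lintegral_zero]
    have hIL : infoLoss μ X (fun a => g (X a)) = 0 := by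
      simp [infoLoss, hzero]
    rw [hIL]
    exact zero_le
  · -- genuinely non-injective case
    have h2Kb : (2 : ℝ≥0∞) ≤ essSup (fun y => ((s ∩ g ⁻¹' {y}).encard : ℝ≥0∞))
        (μ.map fun a => g (X a)) := by
      by_contra h2
      push_neg at h2
      apply hA
      filter_upwards [hKb_ae] with y hy
      by_contra hc
      have h3 : (s ∩ g ⁻¹' {y}).encard ≥ 2 := by
        have := Order.add_one_le_of_lt (not_le.mp hc)
        rw [ge_iff_le, ← one_add_one_eq_two]; exact this
      have h4 : ((s ∩ g ⁻¹' {y}).encard : ℝ≥0∞) ≥ 2 := by exact_mod_cast h3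
      exact absurd (lt_of_le_of_lt (le_trans h4 hy) h2) (lt_irrefl _)
    have hKbar2 : (2:ℝ) ≤ Kbar := by
      rw [hKbar]
      have := ENNReal.toReal_mono hKb_ne_top h2Kb
      simpa using this
    have hL0 : 0 ≤ Real.logb 2 (Kbar - 1) :=
      Real.logb_nonneg one_lt_two (by linarith)
    have hboundn : ∀ n : ℕ, condEntQ μ X (fun a => g (X a)) n
        ≤ ENNReal.ofReal (1 - Pb) + ENNReal.ofReal (Pehat * Real.logb 2 (Kbar - 1)) := by
      intro n
      set κ := condDistrib (fun a => quant n (X a)) (fun a => g (X a)) μ with hκ_def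
      have hae : ∀ᵐ y ∂(μ.map fun a => g (X a)), pmfEntropy (κ y)
          ≤ (Bsetᶜ).indicator (fun y' => ENNReal.ofReal 1
            + ENNReal.ofReal ((κ y' ({quant n (r y')}ᶜ)).toReal * Real.logb 2 (Kbar - 1))) y := by
        filter_upwards [hconc n, hKb_ae] with y h1 h2
        by_cases hyB : y ∈ Bset
        · rw [Set.indicator_of_notMem (by simpa using hyB)]
          have hcard1 : (s ∩ g ⁻¹' {y}).encard = 1 := (hBiff y).mp hyB
          have hfin : (s ∩ g ⁻¹' {y}).Finite := by
            rw [← Set.encard_lt_top_iff, hcard1]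
            exact_mod_cast ENat.coe_lt_top 1
          have hfin' : (quant n '' (s ∩ g ⁻¹' {y})).Finite := hfin.image _
          refine le_of_eq (pmfEntropy_eq_zero_of_card_le_one _ hfin'.toFinset ?_ ?_)
          · rwa [Set.Finite.coe_toFinset]
          · have hc : (hfin'.toFinset.card : ℕ∞) ≤ 1 := by
              rw [← Set.Finite.encard_eq_coe_toFinset_card]
              exact le_trans (Set.encard_image_le _ _) (le_of_eq hcard1)
            exact_mod_cast hc
        · rw [Set.indicator_of_mem (by simpa using hyB)]
          have hfin : (s ∩ g ⁻¹' {y}).Finite := by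
            rw [← Set.encard_lt_top_iff]
            exact lt_of_le_of_lt (hcard_le y) (by exact_mod_cast ENat.coe_lt_top _)
          have hfin' : (quant n '' (s ∩ g ⁻¹' {y})).Finite := hfin.image _
          have hcardT : ((hfin'.toFinset.card : ℝ)) ≤ Kbar := by
            have hc1 : ((hfin'.toFinset.card : ℕ∞) : ℝ≥0∞)
                ≤ essSup (fun y => ((s ∩ g ⁻¹' {y}).encard : ℝ≥0∞))
                  (μ.map fun a => g (X a)) := by
              rw [← Set.Finite.encard_eq_coe_toFinset_card]
              exact le_trans (ENat.toENNReal_le.mpr (Set.encard_image_le _ _)) h2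
            have hc2 := ENNReal.toReal_mono hKb_ne_top hc1
            rw [hKbar]
            simpa using hc2
          have hfano := pmfEntropy_le_fano (κ y) hfin'.toFinset
            (by rwa [Set.Finite.coe_toFinset]) Kbar hKbar2 hcardT (quant n (r y))
          refine hfano.trans (le_of_eq ?_)
          rw [← ENNReal.ofReal_add (by norm_num)
            (mul_nonneg ENNReal.toReal_nonneg hL0)]
      have hstep : condEntQ μ X (fun a => g (X a)) n = ∫⁻ y, pmfEntropy (κ y)
          ∂(μ.map fun a => g (X a)) := rfl
      rw [hstep]
      calc ∫⁻ y, pmfEntropy (κ y) ∂(μ.map fun a => g (X a))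
          ≤ ∫⁻ y, (Bsetᶜ).indicator (fun y' => ENNReal.ofReal 1
              + ENNReal.ofReal ((κ y' ({quant n (r y')}ᶜ)).toReal * Real.logb 2 (Kbar - 1)))
              y ∂(μ.map fun a => g (X a)) := lintegral_mono_ae hae
        _ = ∫⁻ y in Bsetᶜ, (ENNReal.ofReal 1
              + ENNReal.ofReal ((κ y ({quant n (r y)}ᶜ)).toReal * Real.logb 2 (Kbar - 1)))
              ∂(μ.map fun a => g (X a)) := lintegral_indicator hB_meas.compl _
        _ = (ENNReal.ofReal 1) * (μ.map fun a => g (X a)) Bsetᶜ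
              + ∫⁻ y in Bsetᶜ, ENNReal.ofReal ((κ y ({quant n (r y)}ᶜ)).toReal
                * Real.logb 2 (Kbar - 1)) ∂(μ.map fun a => g (X a)) := by
            rw [lintegral_add_left measurable_const, setLIntegral_const]
        _ ≤ ENNReal.ofReal (1 - Pb) + ENNReal.ofReal (Pehat * Real.logb 2 (Kbar - 1)) := by
            gcongr ?_ + ?_
            · rw [ENNReal.ofReal_one, one_mul]
              have hBc : (μ.map fun a => g (X a)) Bsetᶜ = 1 - (μ.map X) Xb := by
                rw [prob_compl_eq_one_sub hB_meas, hηB]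
              rw [hBc]
              have : (μ.map X) Xb = ENNReal.ofReal Pb := by
                rw [hPb, ENNReal.ofReal_toReal (measure_ne_top _ _)]
              rw [this, ← ENNReal.ofReal_one, ← ENNReal.ofReal_sub _ hPb_nonneg]
            · have heq2 : ∀ y, ENNReal.ofReal ((κ y ({quant n (r y)}ᶜ)).toReal
                  * Real.logb 2 (Kbar - 1))
                  = κ y ({quant n (r y)}ᶜ) * ENNReal.ofReal (Real.logb 2 (Kbar - 1)) := by
                intro y
                rw [ENNReal.ofReal_mul ENNReal.toReal_nonneg,
                  ENNReal.ofReal_toReal (measure_ne_top _ _)]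
              calc ∫⁻ y in Bsetᶜ, ENNReal.ofReal ((κ y ({quant n (r y)}ᶜ)).toReal
                    * Real.logb 2 (Kbar - 1)) ∂(μ.map fun a => g (X a))
                  = ∫⁻ y in Bsetᶜ, κ y ({quant n (r y)}ᶜ)
                    * ENNReal.ofReal (Real.logb 2 (Kbar - 1))
                    ∂(μ.map fun a => g (X a)) := lintegral_congr fun y => heq2 y
                _ = (∫⁻ y in Bsetᶜ, κ y ({quant n (r y)}ᶜ) ∂(μ.map fun a => g (X a)))
                    * ENNReal.ofReal (Real.logb 2 (Kbar - 1)) :=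
                    lintegral_mul_const _ (hemeas n)
                _ ≤ (∫⁻ y, κ y ({quant n (r y)}ᶜ) ∂(μ.map fun a => g (X a)))
                    * ENNReal.ofReal (Real.logb 2 (Kbar - 1)) := by
                    gcongr
                    exact Measure.restrict_le_self
                _ ≤ ENNReal.ofReal Pehat * ENNReal.ofReal (Real.logb 2 (Kbar - 1)) := by
                    gcongr
                    exact herr n
                _ = ENNReal.ofReal (Pehat * Real.logb 2 (Kbar - 1)) :=
                    (ENNReal.ofReal_mul hPehat_nonneg).symm
    have hfinal : infoLoss μ X (fun a => g (X a))
        ≤ ENNReal.ofReal (1 - Pb) + ENNReal.ofReal (Pehat * Real.logb 2 (Kbar - 1)) :=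
      iSup_le hboundn
    refine hfinal.trans (le_of_eq ?_)
    rw [← ENNReal.ofReal_add (by linarith) (mul_nonneg hPehat_nonneg hL0)]
end
end

section
/- Let X be a random variable whose distribution P_X has positive information dimension d(X) and is supported on a compact set 𝒳 ⊂ ℝ^N with positive Minkowski dimension d_B(𝒳), let g be measurable, Y = g(X), and let r: 𝒴 → 𝒳 be any reconstructor with error probability P_e = Pr(r(Y) ≠ X). Then the relative information loss satisfies l(X→Y) ≤ P_e · d_B(𝒳)/d(X). -/
open MeasureTheory ProbabilityTheory Filter Set
open scoped ENNReal NNReal Topology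

noncomputable section

/-! ### Auxiliary lemmas -/

section AuxReal

/-- For `0 ≤ p ≤ 1`, `-(p log p) ≤ 1`. -/
lemma aux_neg_mul_log_le_one {p : ℝ} (hp : 0 ≤ p) (hp1 : p ≤ 1) : -(p * Real.log p) ≤ 1 := by
  rcases eq_or_lt_of_le hp with h | h
  · simp [← h]
  · have h1 : Real.log p⁻¹ ≤ p⁻¹ - 1 := Real.log_le_sub_one_of_pos (inv_pos.mpr h)
    rw [Real.log_inv] at h1
    have h2 : p * p⁻¹ = 1 := mul_inv_cancel₀ (ne_of_gt h)
    nlinarith [mul_le_mul_of_nonneg_left h1 hp]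

lemma aux_log_two_pos : (0:ℝ) < Real.log 2 := Real.log_pos one_lt_two

lemma aux_one_div_log_two_le_two : 1 / Real.log 2 ≤ 2 := by
  rw [div_le_iff₀ aux_log_two_pos]
  nlinarith [Real.log_two_gt_d9]

/-- For `0 ≤ p ≤ 1`, `-(p logb₂ p) ≤ 2`. -/
lemma aux_neg_mul_logb_le_two {p : ℝ} (hp : 0 ≤ p) (hp1 : p ≤ 1) :
    -(p * Real.logb 2 p) ≤ 2 := by
  have h : -(p * Real.logb 2 p) = -(p * Real.log p) / Real.log 2 := by
    rw [Real.logb]; ring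
  rw [h]
  calc -(p * Real.log p) / Real.log 2 ≤ 1 / Real.log 2 :=
        div_le_div_of_nonneg_right (aux_neg_mul_log_le_one hp hp1) aux_log_two_pos.le
    _ ≤ 2 := aux_one_div_log_two_le_two

/-- Basic Gibbs-type inequality: for `q ≥ 0`, `c > 0`,
`-(q log q) ≤ q log c⁻¹ + (c - q)`. -/
lemma aux_neg_mul_log_le {q c : ℝ} (hq : 0 ≤ q) (hc : 0 < c) :
    -(q * Real.log q) ≤ q * Real.log c⁻¹ + (c - q) := by
  rcases eq_or_lt_of_le hq with h | h
  · simp [← h, hc.le]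
  · have h1 : Real.log (c / q) ≤ c / q - 1 := Real.log_le_sub_one_of_pos (by positivity)
    have h2 : Real.log (c / q) = Real.log c - Real.log q :=
      Real.log_div (ne_of_gt hc) (ne_of_gt h)
    have h3 : Real.log c⁻¹ = -Real.log c := Real.log_inv c
    have h4 : q * (c / q) = c := by field_simp
    have h5 : q * Real.log (c / q) ≤ q * (c / q - 1) := mul_le_mul_of_nonneg_left h1 hq
    rw [h2, mul_sub, mul_sub, h4] at h5
    rw [h3]
    nlinarith

/-- Fano-type bound for a finite probability vector. -/
lemma aux_finset_ent_bound {β : Type*} [DecidableEq β] (F : Finset β) (b₀ : β)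
    (hb₀ : b₀ ∈ F) (p : β → ℝ) (hp : ∀ b, 0 ≤ p b) (hsum : ∑ b ∈ F, p b = 1) :
    ∑ b ∈ F, -(p b * Real.logb 2 (p b)) ≤
      4 + (1 - p b₀) * Real.logb 2 (F.card) := by
  classical
  set E := F.erase b₀ with hE
  set ε := 1 - p b₀ with hεdef
  have hsplit : p b₀ + ∑ b ∈ E, p b = 1 := by
    rw [hE, Finset.add_sum_erase _ _ hb₀]; exact hsum
  have hεeq : ∑ b ∈ E, p b = ε := by rw [hεdef]; linarith
  have hεnn : 0 ≤ ε := by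
    rw [← hεeq]; exact Finset.sum_nonneg fun b _ => hp b
  have hε1 : ε ≤ 1 := by have := hp b₀; rw [hεdef]; linarith
  have hple : ∀ b ∈ F, p b ≤ 1 := by
    intro b hb
    calc p b ≤ ∑ b ∈ F, p b := Finset.single_le_sum (fun b _ => hp b) hb
      _ = 1 := hsum
  -- bound on the sum over E in terms of natural log
  have claim1 : ∑ b ∈ E, -(p b * Real.log (p b)) ≤ ε * Real.log (E.card) + 1 := by
    rcases eq_or_lt_of_le hεnn with h0 | hεpos
    · -- ε = 0 : all p b = 0 on E
      have hz : ∀ b ∈ E, p b = 0 := by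
        intro b hb
        have := (Finset.sum_eq_zero_iff_of_nonneg (fun b _ => hp b)).mp
          (by rw [hεeq, ← h0]) b hb
        exact this
      have : ∑ b ∈ E, -(p b * Real.log (p b)) = 0 :=
        Finset.sum_eq_zero fun b hb => by simp [hz b hb]
      rw [this, ← h0]; norm_num
    · -- ε > 0 : E is nonempty
      have hEne : E.Nonempty := by
        by_contra h
        rw [Finset.not_nonempty_iff_eq_empty] at h
        rw [h, Finset.sum_empty] at hεeq
        exact absurd hεeq.symm (ne_of_gt hεpos)
      have hM1 : (1:ℝ) ≤ (E.card : ℝ) := by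
        exact_mod_cast Nat.one_le_iff_ne_zero.mpr (Finset.card_ne_zero_of_mem hEne.choose_spec)
      have hMpos : (0:ℝ) < (E.card : ℝ) := lt_of_lt_of_le one_pos hM1
      set c := ε / (E.card : ℝ) with hc
      have hcpos : 0 < c := div_pos hεpos hMpos
      have hterm : ∀ b ∈ E, -(p b * Real.log (p b)) ≤
          p b * Real.log c⁻¹ + (c - p b) :=
        fun b _ => aux_neg_mul_log_le (hp b) hcpos
      have hsum' : ∑ b ∈ E, -(p b * Real.log (p b)) ≤
          ∑ b ∈ E, (p b * Real.log c⁻¹ + (c - p b)) :=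
        Finset.sum_le_sum hterm
      have hsum'' : ∑ b ∈ E, (p b * Real.log c⁻¹ + (c - p b))
          = ε * Real.log c⁻¹ := by
        rw [Finset.sum_add_distrib, ← Finset.sum_mul, hεeq, Finset.sum_sub_distrib,
          Finset.sum_const, hεeq, nsmul_eq_mul, hc]
        field_simp
        ring
      have hlogc : Real.log c⁻¹ = Real.log (E.card : ℝ) - Real.log ε := by
        rw [hc, inv_div, Real.log_div (ne_of_gt hMpos) (ne_of_gt hεpos)]
      have hfin : ε * Real.log c⁻¹ ≤ ε * Real.log (E.card : ℝ) + 1 := by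
        rw [hlogc, mul_sub]
        have : -(ε * Real.log ε) ≤ 1 := aux_neg_mul_log_le_one hεnn hε1
        linarith
      calc ∑ b ∈ E, -(p b * Real.log (p b)) ≤ ε * Real.log c⁻¹ := by
            rw [← hsum'']; exact hsum'
        _ ≤ ε * Real.log (E.card : ℝ) + 1 := hfin
  -- convert to logb and assemble
  have hsplit2 : ∑ b ∈ F, -(p b * Real.logb 2 (p b)) =
      -(p b₀ * Real.logb 2 (p b₀)) + ∑ b ∈ E, -(p b * Real.logb 2 (p b)) := by
    rw [hE]
    exact (Finset.add_sum_erase F _ hb₀).symm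
  have hlogb : ∑ b ∈ E, -(p b * Real.logb 2 (p b)) =
      (∑ b ∈ E, -(p b * Real.log (p b))) / Real.log 2 := by
    rw [Finset.sum_div]
    refine Finset.sum_congr rfl fun b _ => ?_
    rw [Real.logb]; ring
  have h2 : (∑ b ∈ E, -(p b * Real.log (p b))) / Real.log 2 ≤
      (ε * Real.log (E.card) + 1) / Real.log 2 :=
    div_le_div_of_nonneg_right claim1 aux_log_two_pos.le
  have h3 : (ε * Real.log (E.card) + 1) / Real.log 2
      = ε * Real.logb 2 (E.card) + 1 / Real.log 2 := by
    rw [Real.logb]; ring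
  have h4 : ε * Real.logb 2 (E.card) ≤ ε * Real.logb 2 (F.card) := by
    rcases Nat.eq_zero_or_pos E.card with h | h
    · rw [h]
      have hnn : (0:ℝ) ≤ Real.logb 2 (F.card) := by
        apply Real.logb_nonneg one_lt_two
        exact_mod_cast Nat.one_le_iff_ne_zero.mpr (Finset.card_ne_zero_of_mem hb₀)
      simp only [Nat.cast_zero, Real.logb_zero, mul_zero]
      exact mul_nonneg hεnn hnn
    · apply mul_le_mul_of_nonneg_left _ hεnn
      apply Real.logb_le_logb_of_le one_lt_two
      · exact_mod_cast h
      · exact_mod_cast Finset.card_le_card (Finset.erase_subset _ _)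
  have h5 : -(p b₀ * Real.logb 2 (p b₀)) ≤ 2 :=
    aux_neg_mul_logb_le_two (hp b₀) (hple b₀ hb₀)
  have h6 : (1:ℝ) / Real.log 2 ≤ 2 := aux_one_div_log_two_le_two
  calc ∑ b ∈ F, -(p b * Real.logb 2 (p b))
      = -(p b₀ * Real.logb 2 (p b₀)) + ∑ b ∈ E, -(p b * Real.logb 2 (p b)) := hsplit2
    _ ≤ 2 + ((ε * Real.log (E.card) + 1) / Real.log 2) := by
        rw [hlogb]; exact add_le_add h5 h2
    _ = 2 + (ε * Real.logb 2 (E.card) + 1 / Real.log 2) := by rw [h3]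
    _ ≤ 2 + (ε * Real.logb 2 (F.card) + 2) := by
        exact add_le_add_right (add_le_add h4 h6) 2
    _ = 4 + ε * Real.logb 2 (F.card) := by ring

end AuxReal

section AuxMeasure

/-- Fano-type bound for `pmfEntropy` of a probability measure with finite support. -/
lemma aux_pmfEntropy_le {β : Type*} [MeasurableSpace β] [MeasurableSingletonClass β]
    (ν : Measure β) [IsProbabilityMeasure ν] (F : Finset β)
    (hF : ν ((↑F : Set β)ᶜ) = 0) (b₀ : β) :
    pmfEntropy ν ≤ ENNReal.ofReal 4 +
      ν ({b₀}ᶜ) * ENNReal.ofReal (Real.logb 2 (F.card + 1)) := by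
  classical
  set F' := insert b₀ F with hF'def
  have hsub : ((↑F' : Set β)ᶜ) ⊆ ((↑F : Set β)ᶜ) := by
    apply compl_subset_compl.mpr
    intro x hx
    simp only [hF'def, Finset.coe_insert, Set.mem_insert_iff]
    exact Or.inr hx
  have hF' : ν ((↑F' : Set β)ᶜ) = 0 := measure_mono_null hsub hF
  set p : β → ℝ := fun b => (ν {b}).toReal with hpdef
  have hterm0 : ∀ b ∉ F', ENNReal.ofReal (-(p b * Real.logb 2 (p b))) = 0 := by
    intro b hb
    have hb0 : ν {b} = 0 := by
      apply measure_mono_null _ hF'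
      intro x hx
      simp only [Set.mem_singleton_iff] at hx
      subst hx
      simpa using hb
    simp [hpdef, hb0]
  have hE : pmfEntropy ν = ∑ b ∈ F', ENNReal.ofReal (-(p b * Real.logb 2 (p b))) :=
    tsum_eq_sum hterm0
  have hpnn : ∀ b, 0 ≤ p b := fun b => ENNReal.toReal_nonneg
  have hple : ∀ b, p b ≤ 1 := by
    intro b
    have h1 : ν {b} ≤ 1 := prob_le_one
    calc p b = (ν {b}).toReal := rfl
      _ ≤ (1 : ℝ≥0∞).toReal := ENNReal.toReal_mono ENNReal.one_ne_top h1
      _ = 1 := by simp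
  have htermnn : ∀ b, 0 ≤ -(p b * Real.logb 2 (p b)) := by
    intro b
    have h1 : Real.logb 2 (p b) ≤ 0 := Real.logb_nonpos one_lt_two (hpnn b) (hple b)
    nlinarith [hpnn b]
  have hmeasF' : ν (↑F' : Set β) = 1 := by
    have h := measure_add_measure_compl (μ := ν) (s := (↑F' : Set β)) F'.measurableSet
    rw [hF', add_zero, measure_univ] at h
    exact h
  have hsum : ∑ b ∈ F', p b = 1 := by
    have h1 : ∑ b ∈ F', ν {b} = ν (↑F' : Set β) := by
      rw [show (↑F' : Set β) = ⋃ b ∈ F', {b} from by ext x; simp]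
      rw [measure_biUnion_finset _ (fun b _ => measurableSet_singleton b)]
      intro x _ y _ hxy
      simp [Function.onFun, Set.disjoint_singleton, hxy]
    have h2 : (∑ b ∈ F', ν {b}).toReal = 1 := by rw [h1, hmeasF']; simp
    rw [← h2, ENNReal.toReal_sum fun b _ => measure_ne_top ν _]
  have key := aux_finset_ent_bound F' b₀ (Finset.mem_insert_self b₀ F) p hpnn hsum
  have hεnn : 0 ≤ 1 - p b₀ := by linarith [hple b₀]
  have hεeq : 1 - p b₀ = (ν ({b₀}ᶜ)).toReal := by
    rw [measure_compl (measurableSet_singleton b₀) (measure_ne_top ν _), measure_univ,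
      ENNReal.toReal_sub_of_le prob_le_one ENNReal.one_ne_top]
    simp [hpdef]
  have hcard : (F'.card : ℝ) ≤ (F.card : ℝ) + 1 := by
    exact_mod_cast Finset.card_insert_le b₀ F
  have hcardpos : (0:ℝ) < (F'.card : ℝ) := by
    have : 0 < F'.card := Finset.card_pos.mpr ⟨b₀, Finset.mem_insert_self b₀ F⟩
    exact_mod_cast this
  have hlogle : Real.logb 2 (F'.card) ≤ Real.logb 2 ((F.card : ℝ) + 1) :=
    Real.logb_le_logb_of_le one_lt_two hcardpos hcard
  have hlognn : (0:ℝ) ≤ Real.logb 2 ((F.card : ℝ) + 1) := by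
    apply Real.logb_nonneg one_lt_two
    have : (0:ℝ) ≤ (F.card : ℝ) := by positivity
    linarith
  rw [hE, ← ENNReal.ofReal_sum_of_nonneg fun b _ => htermnn b]
  calc ENNReal.ofReal (∑ b ∈ F', -(p b * Real.logb 2 (p b)))
      ≤ ENNReal.ofReal (4 + (1 - p b₀) * Real.logb 2 ((F.card : ℝ) + 1)) := by
        apply ENNReal.ofReal_le_ofReal
        refine key.trans ?_
        have : (1 - p b₀) * Real.logb 2 (F'.card) ≤
            (1 - p b₀) * Real.logb 2 ((F.card : ℝ) + 1) :=
          mul_le_mul_of_nonneg_left hlogle hεnn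
        linarith
    _ = ENNReal.ofReal 4 +
        ENNReal.ofReal ((1 - p b₀) * Real.logb 2 ((F.card : ℝ) + 1)) := by
        rw [ENNReal.ofReal_add (by norm_num) (mul_nonneg hεnn hlognn)]
    _ = ENNReal.ofReal 4 + ν ({b₀}ᶜ) * ENNReal.ofReal (Real.logb 2 ((F.card : ℝ) + 1)) := by
        rw [ENNReal.ofReal_mul hεnn, hεeq, ENNReal.ofReal_toReal (measure_ne_top ν _)]

/-- The quantizer is measurable. -/
lemma aux_measurable_quant {ι : Type*} (n : ℕ) : Measurable (quant (ι := ι) n) := by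
  apply measurable_pi_lambda
  intro i
  apply Measurable.div_const
  exact (measurable_of_countable (fun z : ℤ => (z : ℝ))).comp
    (Int.measurable_floor.comp ((measurable_pi_apply i).const_mul _))

/-- The image of a bounded set under the quantizer is finite. -/
lemma aux_quant_image_finite {ι : Type*} [Fintype ι] {s : Set (ι → ℝ)}
    (hs : Bornology.IsBounded s) (n : ℕ) : (quant n '' s).Finite := by
  obtain ⟨R, hR⟩ := hs.subset_closedBall 0
  set K : Set (ι → ℤ) := Set.pi Set.univ fun _ => Set.Icc (⌊-((2:ℝ)^n * R)⌋) ⌊(2:ℝ)^n * R⌋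
    with hKdef
  have hK : K.Finite := Set.Finite.pi fun i => Set.finite_Icc _ _
  have hsub : quant n '' s ⊆ (fun k : ι → ℤ => fun i => (k i : ℝ) / 2 ^ n) '' K := by
    rintro _ ⟨x, hx, rfl⟩
    refine ⟨fun i => ⌊(2:ℝ) ^ n * x i⌋, ?_, rfl⟩
    intro i _
    have hxi : |x i| ≤ R := by
      have hx' : dist x 0 ≤ R := Metric.mem_closedBall.mp (hR hx)
      calc |x i| = dist (x i) 0 := by simp [Real.dist_eq]
        _ ≤ dist x 0 := dist_le_pi_dist x 0 i
        _ ≤ R := hx'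
    have hpow : (0:ℝ) < 2 ^ n := by positivity
    obtain ⟨hlo, hhi⟩ := abs_le.mp hxi
    constructor
    · exact Int.floor_le_floor (by nlinarith)
    · exact Int.floor_le_floor (by nlinarith)
  exact (hK.image _).subset hsub

end AuxMeasure

section AuxMain

/-- Key bound : `H(X̂ₙ|Y) ≤ 4 + P_e log₂(Mₙ + 1)`. -/
lemma aux_condEntQ_le {α ι γ : Type*} [MeasurableSpace α] [Fintype ι] [MeasurableSpace γ]
    (μ : Measure α) [IsProbabilityMeasure μ] (X : α → ι → ℝ) (hX : Measurable X)
    (g : (ι → ℝ) → γ) (hg : Measurable g) (r : γ → ι → ℝ) (hr : Measurable r)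
    (n : ℕ) (F : Finset (ι → ℝ)) (hF : ∀ a, quant n (X a) ∈ F) :
    condEntQ μ X (fun a => g (X a)) n ≤ ENNReal.ofReal 4 +
      μ {a | r (g (X a)) ≠ X a} * ENNReal.ofReal (Real.logb 2 (F.card + 1)) := by
  classical
  set Y : α → γ := fun a => g (X a) with hYdef
  set Xq : α → ι → ℝ := fun a => quant n (X a) with hXqdef
  set Z : γ → ι → ℝ := fun y => quant n (r y) with hZdef
  have hY : Measurable Y := hg.comp hX
  have hXq : Measurable Xq := (aux_measurable_quant n).comp hX
  have hZ : Measurable Z := (aux_measurable_quant n).comp hr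
  set κ := condDistrib Xq Y μ with hκdef
  set νY := μ.map Y with hνYdef
  have : IsProbabilityMeasure νY := Measure.isProbabilityMeasure_map hY.aemeasurable
  set ρ : Measure (γ × (ι → ℝ)) := μ.map fun a => (Y a, Xq a) with hρdef
  have hρprob : IsProbabilityMeasure ρ :=
    Measure.isProbabilityMeasure_map (hY.prodMk hXq).aemeasurable
  have hκeq : κ = ρ.condKernel := by rw [hκdef, condDistrib]
  have hfst : ρ.fst = νY := Measure.fst_map_prodMk hXq
  have hdis : νY ⊗ₘ κ = ρ := by
    rw [hκeq, ← hfst]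
    exact ρ.disintegrate ρ.condKernel
  -- the "diagonal-type" set
  set S : Set (γ × (ι → ℝ)) := {q | q.2 = Z q.1} with hSdef
  have hSmeas : MeasurableSet S :=
    measurableSet_eq_fun measurable_snd (hZ.comp measurable_fst)
  have hFmeas : MeasurableSet (↑F : Set (ι → ℝ)) := F.measurableSet
  -- a.e. support of the conditional kernel
  have hsupp : ∀ᵐ y ∂νY, κ y ((↑F : Set (ι → ℝ))ᶜ) = 0 := by
    have h1 : ∫⁻ y, κ y ((↑F : Set (ι → ℝ))ᶜ) ∂νY = 0 := by
      have h2 : ∫⁻ y, κ y ((↑F : Set (ι → ℝ))ᶜ) ∂νY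
          = (νY ⊗ₘ κ) (Set.univ ×ˢ ((↑F : Set (ι → ℝ))ᶜ)) := by
        rw [Measure.compProd_apply_prod MeasurableSet.univ hFmeas.compl,
          Measure.restrict_univ]
      rw [h2, hdis, hρdef,
        Measure.map_apply (hY.prodMk hXq) (MeasurableSet.univ.prod hFmeas.compl)]
      have : (fun a => (Y a, Xq a)) ⁻¹' (Set.univ ×ˢ ((↑F : Set (ι → ℝ))ᶜ)) = ∅ := by
        ext a
        simp [hXqdef, hF a]
      rw [this, measure_empty]
    have hm : Measurable fun y => κ y ((↑F : Set (ι → ℝ))ᶜ) :=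
      Kernel.measurable_coe κ hFmeas.compl
    exact (lintegral_eq_zero_iff hm).mp h1
  -- pointwise entropy bound
  have hpoint : ∀ᵐ y ∂νY, pmfEntropy (κ y) ≤ ENNReal.ofReal 4 +
      κ y ({Z y}ᶜ) * ENNReal.ofReal (Real.logb 2 (F.card + 1)) := by
    filter_upwards [hsupp] with y hy
    exact aux_pmfEntropy_le (κ y) F hy (Z y)
  -- integrate
  have hmeasg : Measurable fun y => κ y (Prod.mk y ⁻¹' Sᶜ) :=
    Kernel.measurable_kernel_prodMk_left hSmeas.compl
  have hpre : ∀ y, Prod.mk y ⁻¹' Sᶜ = ({Z y}ᶜ : Set (ι → ℝ)) := by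
    intro y
    ext x
    simp [hSdef]
  have hint : ∫⁻ y, κ y ({Z y}ᶜ) ∂νY ≤ μ {a | r (g (X a)) ≠ X a} := by
    have h1 : ∫⁻ y, κ y ({Z y}ᶜ) ∂νY = (νY ⊗ₘ κ) Sᶜ := by
      rw [Measure.compProd_apply hSmeas.compl]
      exact lintegral_congr fun y => by rw [hpre y]
    rw [h1, hdis, hρdef, Measure.map_apply (hY.prodMk hXq) hSmeas.compl]
    apply measure_mono
    intro a ha
    simp only [Set.mem_preimage, Set.mem_compl_iff, hSdef, Set.mem_setOf_eq] at ha
    simp only [Set.mem_setOf_eq]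
    intro hcon
    apply ha
    rw [hXqdef, hZdef]
    simp only [hYdef]
    rw [hcon]
  calc condEntQ μ X Y n = ∫⁻ y, pmfEntropy (κ y) ∂νY := rfl
    _ ≤ ∫⁻ y, (ENNReal.ofReal 4 +
        κ y ({Z y}ᶜ) * ENNReal.ofReal (Real.logb 2 (F.card + 1))) ∂νY :=
      lintegral_mono_ae hpoint
    _ = ENNReal.ofReal 4 +
        (∫⁻ y, κ y ({Z y}ᶜ) ∂νY) * ENNReal.ofReal (Real.logb 2 (F.card + 1)) := by
        rw [lintegral_add_left measurable_const, lintegral_const, measure_univ, mul_one]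
        congr 1
        rw [← lintegral_mul_const _ (show Measurable fun y => κ y ({Z y}ᶜ) by
          simpa only [hpre] using hmeasg)]
    _ ≤ ENNReal.ofReal 4 +
        μ {a | r (g (X a)) ≠ X a} * ENNReal.ofReal (Real.logb 2 (F.card + 1)) := by
        gcongr

end AuxMain

/-- **Relative information loss bounds the reconstruction error.**  Let `X` have
positive information dimension `d(X) = dX` and distribution supported on a compact
set `𝒳 ⊂ ℝᴺ` of positive Minkowski (box-counting) dimension `d_B(𝒳) = dB`, let
`Y = g(X)` and `r` be any (measurable) reconstructor with error probability
`P_e = Pr(r(Y) ≠ X)`.  Then `l(X→Y) ≤ P_e · d_B(𝒳)/d(X)`. -/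
theorem relLoss_le_error_probability
    {α ι γ : Type*} [MeasurableSpace α] [Fintype ι] [MeasurableSpace γ]
    (μ : Measure α) [IsProbabilityMeasure μ]
    (X : α → ι → ℝ) (hX : Measurable X)
    (g : (ι → ℝ) → γ) (hg : Measurable g)
    (s : Set (ι → ℝ)) (hs : IsCompact s) (hXs : ∀ a, X a ∈ s)
    (dX : ℝ) (hdXpos : 0 < dX)
    (hdX : Tendsto (fun n : ℕ => (entQ μ X n).toReal / n) atTop (𝓝 dX))
    (dB : ℝ) (hdBpos : 0 < dB)
    (hdB : Tendsto (fun n : ℕ => Real.logb 2 ((quant n '' s).ncard) / n) atTop (𝓝 dB))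
    (r : γ → ι → ℝ) (hr : Measurable r)
    (l : ℝ)
    (hl : Tendsto (fun n : ℕ => relLossSeq μ X (fun a => g (X a)) n) atTop (𝓝 l)) :
    l ≤ (μ {a | r (g (X a)) ≠ X a}).toReal * dB / dX := by
  classical
  -- `α` is nonempty (it carries a probability measure)
  have hαne : Nonempty α := by
    by_contra h
    rw [not_nonempty_iff] at h
    have h1 : μ Set.univ = 1 := measure_univ
    rw [Set.univ_eq_empty_iff.mpr h, measure_empty] at h1
    exact zero_ne_one h1
  obtain ⟨a₀⟩ := hαne
  have hsb : Bornology.IsBounded s := hs.isBounded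
  have hfin : ∀ n : ℕ, (quant n '' s).Finite := fun n => aux_quant_image_finite hsb n
  set F : ℕ → Finset (ι → ℝ) := fun n => (hfin n).toFinset with hFdef
  have hmem : ∀ n a, quant n (X a) ∈ F n := by
    intro n a
    rw [hFdef, Set.Finite.mem_toFinset]
    exact ⟨X a, hXs a, rfl⟩
  set M : ℕ → ℕ := fun n => (F n).card with hMdef
  have hM1 : ∀ n, 1 ≤ M n := fun n =>
    Finset.card_pos.mpr ⟨quant n (X a₀), hmem n a₀⟩
  have hM1' : ∀ n, (1:ℝ) ≤ (M n : ℝ) := fun n => by exact_mod_cast hM1 n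
  have hncard : ∀ n, (quant n '' s).ncard = M n := fun n =>
    Set.ncard_eq_toFinset_card _ (hfin n)
  set Pe := μ {a | r (g (X a)) ≠ X a} with hPedef
  have hPet : Pe ≠ ∞ := measure_ne_top μ _
  set pe := Pe.toReal with hpedef
  have hpenn : 0 ≤ pe := ENNReal.toReal_nonneg
  set b : ℕ → ℝ := fun n => 4 + pe * Real.logb 2 ((M n : ℝ) + 1) with hbdef
  have hlognn : ∀ n, 0 ≤ Real.logb 2 ((M n : ℝ) + 1) := fun n =>
    Real.logb_nonneg one_lt_two (by linarith [hM1' n])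
  -- the key entropy bound, in real form
  have hckey : ∀ n, (condEntQ μ X (fun a => g (X a)) n).toReal ≤ b n := by
    intro n
    have h1 := aux_condEntQ_le μ X hX g hg r hr n (F n) (hmem n)
    have hne : ENNReal.ofReal 4 +
        Pe * ENNReal.ofReal (Real.logb 2 ((F n).card + 1)) ≠ ∞ := by
      apply ENNReal.add_ne_top.mpr
      exact ⟨ENNReal.ofReal_ne_top, ENNReal.mul_ne_top hPet ENNReal.ofReal_ne_top⟩
    have h2 : (ENNReal.ofReal 4 +
        Pe * ENNReal.ofReal (Real.logb 2 ((F n).card + 1))).toReal = b n := by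
      rw [ENNReal.toReal_add ENNReal.ofReal_ne_top
        (ENNReal.mul_ne_top hPet ENNReal.ofReal_ne_top), ENNReal.toReal_mul,
        ENNReal.toReal_ofReal (by norm_num : (0:ℝ) ≤ 4),
        ENNReal.toReal_ofReal (hlognn n)]
    rw [← h2]
    exact ENNReal.toReal_mono hne h1
  -- pointwise bound on the relative loss sequence
  have hstep : ∀ n, relLossSeq μ X (fun a => g (X a)) n ≤ b n / (entQ μ X n).toReal :=
    fun n => div_le_div_of_nonneg_right (hckey n) ENNReal.toReal_nonneg
  -- the limit of `logb 2 (M n + 1) / n` is `dB`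
  have hdB' : Tendsto (fun n : ℕ => Real.logb 2 (M n) / n) atTop (𝓝 dB) := by
    refine hdB.congr fun n => ?_
    rw [hncard n]
  have hL : Tendsto (fun n : ℕ => Real.logb 2 ((M n : ℝ) + 1) / n) atTop (𝓝 dB) := by
    have hup : Tendsto (fun n : ℕ => 1 / (n:ℝ) + Real.logb 2 (M n) / n) atTop
        (𝓝 (0 + dB)) := (tendsto_const_div_atTop_nhds_zero_nat 1).add hdB'
    rw [zero_add] at hup
    refine tendsto_of_tendsto_of_tendsto_of_le_of_le hdB' hup ?_ ?_
    · intro n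
      dsimp only
      apply div_le_div_of_nonneg_right _ (Nat.cast_nonneg n)
      apply Real.logb_le_logb_of_le one_lt_two (by linarith [hM1' n])
      linarith
    · intro n
      dsimp only
      rw [← add_div]
      apply div_le_div_of_nonneg_right _ (Nat.cast_nonneg n)
      have h2M : ((M n : ℝ) + 1) ≤ 2 * (M n : ℝ) := by linarith [hM1' n]
      calc Real.logb 2 ((M n : ℝ) + 1) ≤ Real.logb 2 (2 * (M n : ℝ)) :=
            Real.logb_le_logb_of_le one_lt_two (by linarith [hM1' n]) h2M
        _ = 1 + Real.logb 2 (M n) := by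
            rw [Real.logb_mul (by norm_num) (by linarith [hM1' n] : (M n : ℝ) ≠ 0),
              Real.logb_self_eq_one one_lt_two]
  -- the limit of the bound sequence
  have hbne : Tendsto (fun n : ℕ => b n / n) atTop (𝓝 (pe * dB)) := by
    have h1 : Tendsto (fun n : ℕ => 4 / (n:ℝ) +
        pe * (Real.logb 2 ((M n : ℝ) + 1) / n)) atTop (𝓝 (0 + pe * dB)) :=
      (tendsto_const_div_atTop_nhds_zero_nat 4).add (hL.const_mul pe)
    rw [zero_add] at h1
    refine h1.congr fun n => ?_
    rw [hbdef]
    ring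
  have hquot : Tendsto (fun n : ℕ => (b n / n) / ((entQ μ X n).toReal / n)) atTop
      (𝓝 (pe * dB / dX)) := hbne.div hdX (ne_of_gt hdXpos)
  -- eventual comparison
  have hev : ∀ᶠ n in atTop, relLossSeq μ X (fun a => g (X a)) n ≤
      (b n / n) / ((entQ μ X n).toReal / n) := by
    filter_upwards [eventually_ge_atTop 1] with n hn
    have hne : (n:ℝ) ≠ 0 := Nat.cast_ne_zero.mpr (by omega)
    rw [div_div_div_cancel_right₀ hne]
    exact hstep n
  exact le_of_tendsto_of_tendsto hl hquot hev
end
end
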